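/- Under the hypotheses that ∫∫ R(x,y)(u(x)−u(y))² p(x)p(y) dμ dμ ≥ C‖u‖²_{L²} for mean-zero u (Theorem 3.11) and the symmetrization identity, any solution u (with ∫ u p dμ = 0) of L_t u = r satisfies C‖u‖²_{L²(M)} ≤ 2t c₁ ‖u‖_{L²}‖r‖_{L²}, hence ‖u‖_{L²(M)} ≤ (2t c₁/C) ‖r‖_{L²(M)} (with the paper's normalization L_t includes the factor 1/t and C_t, giving ‖u‖_{L²} ≤ C'‖r‖_{L²} with C' independent of t). -/

import Mathlib

open MeasureTheory

/-- L² stability of `L_t u(x) = (1/t)∫ R_t(x,y)(u(x)−u(y))p(y)dμ(y)`: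
assuming the coercivity `∫∫ R_t(x,y)(u x − u y)² p p dμdμ ≥ C‖u‖²` for the weighted
mean-zero solution `u` of `L_t u = r`, together with the symmetrization identity,
and `0 < c₀ ≤ p ≤ c₁`, one gets `‖u‖_{L²} ≤ (2 t c₁ / C) ‖r‖_{L²}`. -/
theorem stmt15 {M : Type*} [MeasurableSpace M] (μ : Measure M) [IsFiniteMeasure μ]
    (Rt : M → M → ℝ) (hRmeas : Measurable (Function.uncurry Rt))
    (hRnn : ∀ x y, 0 ≤ Rt x y) (hRsym : ∀ x y, Rt x y = Rt y x)
    (p : M → ℝ) (hpmeas : Measurable p)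
    (c₀ c₁ : ℝ) (hc₀ : 0 < c₀) (hp : ∀ x, c₀ ≤ p x ∧ p x ≤ c₁)
    (t : ℝ) (ht : 0 < t) (C : ℝ) (hC : 0 < C)
    (u r : M → ℝ) (hu : MemLp u 2 μ) (hr : MemLp r 2 μ)
    (humean : (∫ x, u x * p x ∂μ) = 0)
    (heq : ∀ x, (1 / t) * ∫ y, Rt x y * (u x - u y) * p y ∂μ = r x)
    (hcoer : C * ∫ x, (u x) ^ 2 ∂μ ≤
      ∫ x, ∫ y, Rt x y * (u x - u y) ^ 2 * p x * p y ∂μ ∂μ)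
    (hsymid : ∫ x, u x * ((1 / t) * ∫ y, Rt x y * (u x - u y) * p y ∂μ) * p x ∂μ =
      (1 / (2 * t)) * ∫ x, ∫ y, Rt x y * (u x - u y) ^ 2 * p x * p y ∂μ ∂μ) :
    Real.sqrt (∫ x, (u x) ^ 2 ∂μ) ≤
      (2 * t * c₁ / C) * Real.sqrt (∫ x, (r x) ^ 2 ∂μ) := by
  rcases isEmpty_or_nonempty M with hM | hM
  · have hμ : μ = 0 := by ext s _; simp [Set.eq_empty_of_isEmpty s]
    simp [hμ]
  obtain ⟨x₀⟩ := hM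
  have hc₁0 : 0 < c₁ := lt_of_lt_of_le hc₀ (le_trans (hp x₀).1 (hp x₀).2)
  have hAnn : 0 ≤ ∫ x, (u x) ^ 2 ∂μ := integral_nonneg fun x => sq_nonneg _
  have hBnn : 0 ≤ ∫ x, (r x) ^ 2 ∂μ := integral_nonneg fun x => sq_nonneg _
  set A := ∫ x, (u x) ^ 2 ∂μ
  set B := ∫ x, (r x) ^ 2 ∂μ
  set I := ∫ x, u x * r x * p x ∂μ with hI
  -- use symmetrization identity and the equation to identify the double integral
  have hsym' : I = (1 / (2 * t)) *
      ∫ x, ∫ y, Rt x y * (u x - u y) ^ 2 * p x * p y ∂μ ∂μ := by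
    rw [hI, ← hsymid]
    refine integral_congr_ae (Filter.Eventually.of_forall fun x => ?_)
    show u x * r x * p x = u x * ((1 / t) * ∫ y, Rt x y * (u x - u y) * p y ∂μ) * p x
    rw [heq x]
  have hD : (∫ x, ∫ y, Rt x y * (u x - u y) ^ 2 * p x * p y ∂μ ∂μ) = 2 * t * I := by
    rw [hsym']
    field_simp
  have hkey : C * A ≤ 2 * t * I := by rw [← hD]; exact hcoer
  -- integrability facts
  have h2 : ENNReal.ofReal (2 : ℝ) = 2 := by norm_num
  have hu2 : MemLp u (ENNReal.ofReal 2) μ := by rw [h2]; exact hu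
  have hr2 : MemLp r (ENNReal.ofReal 2) μ := by rw [h2]; exact hr
  have hur : Integrable (fun x => u x * r x) μ := by
    have h := hr.smul (E := ℝ) (𝕜 := ℝ) hu (p := 2) (q := 2) (r := 1)
    exact memLp_one_iff_integrable.mp h
  have hurp : Integrable (fun x => u x * r x * p x) μ := by
    have h := hur.bdd_mul (c := c₁) hpmeas.aestronglyMeasurable
      (Filter.Eventually.of_forall fun x => by
        rw [Real.norm_eq_abs, abs_of_nonneg (le_trans hc₀.le (hp x).1)]
        exact (hp x).2)
    exact h.congr (Filter.Eventually.of_forall fun x => by ring)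
  have hconj : (2 : ℝ).HolderConjugate 2 := ⟨by norm_num, by norm_num, by norm_num⟩
  have hCS : ∫ x, ‖u x‖ * ‖r x‖ ∂μ ≤
      (∫ x, ‖u x‖ ^ (2 : ℝ) ∂μ) ^ ((1 : ℝ) / 2) * (∫ x, ‖r x‖ ^ (2 : ℝ) ∂μ) ^ ((1 : ℝ) / 2) :=
    integral_mul_norm_le_Lp_mul_Lq hconj hu2 hr2
  have hnormu : (∫ x, ‖u x‖ ^ (2 : ℝ) ∂μ) = A := by
    refine integral_congr_ae (Filter.Eventually.of_forall fun x => ?_)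
    show ‖u x‖ ^ (2 : ℝ) = u x ^ 2
    rw [show (2 : ℝ) = ((2 : ℕ) : ℝ) by norm_num, Real.rpow_natCast, Real.norm_eq_abs, sq_abs]
  have hnormr : (∫ x, ‖r x‖ ^ (2 : ℝ) ∂μ) = B := by
    refine integral_congr_ae (Filter.Eventually.of_forall fun x => ?_)
    show ‖r x‖ ^ (2 : ℝ) = r x ^ 2
    rw [show (2 : ℝ) = ((2 : ℕ) : ℝ) by norm_num, Real.rpow_natCast, Real.norm_eq_abs, sq_abs]
  rw [hnormu, hnormr, ← Real.sqrt_eq_rpow, ← Real.sqrt_eq_rpow] at hCS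
  -- bound I
  have hIle : I ≤ c₁ * ∫ x, ‖u x‖ * ‖r x‖ ∂μ := by
    rw [hI, ← integral_const_mul]
    refine integral_mono hurp ?_ fun x => ?_
    · exact (hur.norm.congr (Filter.Eventually.of_forall fun x => by
        simp [norm_mul])).const_mul c₁
    · have hpx0 : 0 ≤ p x := le_trans hc₀.le (hp x).1
      calc u x * r x * p x ≤ |u x * r x| * p x :=
            mul_le_mul_of_nonneg_right (le_abs_self _) hpx0
        _ ≤ |u x * r x| * c₁ := mul_le_mul_of_nonneg_left (hp x).2 (abs_nonneg _)
        _ = c₁ * (‖u x‖ * ‖r x‖) := by rw [Real.norm_eq_abs, Real.norm_eq_abs, abs_mul]; ring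
  have hfinal : C * A ≤ 2 * t * c₁ * (Real.sqrt A * Real.sqrt B) := by
    calc C * A ≤ 2 * t * I := hkey
      _ ≤ 2 * t * (c₁ * ∫ x, ‖u x‖ * ‖r x‖ ∂μ) := by
          apply mul_le_mul_of_nonneg_left hIle (by positivity)
      _ ≤ 2 * t * c₁ * (Real.sqrt A * Real.sqrt B) := by
          rw [mul_assoc (2 * t) c₁]
          exact mul_le_mul_of_nonneg_left (mul_le_mul_of_nonneg_left hCS hc₁0.le)
            (by positivity)
  rw [div_mul_eq_mul_div, le_div_iff₀ hC]
  have hAs : Real.sqrt A * Real.sqrt A = A := Real.mul_self_sqrt hAnn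
  rcases eq_or_lt_of_le (Real.sqrt_nonneg A) with h0 | h0
  · rw [← h0, zero_mul]
    positivity
  · nlinarith [Real.sqrt_nonneg B, hfinal, hAs, h0]
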